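/- For all n ≥ 0, pp̄(3n+2) ≡ 0 (mod 3). -/

import Mathlib

open PowerSeries Finset
variable {R : Type*} [CommRing R]



/-- the geometric-type inverse of 1 - X^j -/
noncomputable def inv1 (R : Type*) [CommRing R] (j : ℕ) : R⟦X⟧ :=
  PowerSeries.mk fun m => if j ∣ m then 1 else 0

theorem inv1_mul (j : ℕ) (hj : 0 < j) : (1 - X ^ j) * inv1 R j = 1 := by
  ext m
  rw [sub_mul, one_mul, map_sub, PowerSeries.coeff_one]
  rcases Nat.eq_zero_or_pos m with rfl | hm
  · rw [if_pos rfl, PowerSeries.coeff_zero_eq_constantCoeff, map_mul, map_pow,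
      PowerSeries.constantCoeff_X, zero_pow hj.ne', zero_mul, inv1]
    rw [PowerSeries.constantCoeff_mk, if_pos (dvd_zero j)]
    ring
  · rw [PowerSeries.coeff_X_pow_mul' ]
    simp only [hm.ne', if_false]
    by_cases h : j ≤ m
    · simp only [h, if_true, inv1, PowerSeries.coeff_mk]
      have : j ∣ m ↔ j ∣ m - j := by
        constructor
        · intro hd; exact (Nat.dvd_sub hd dvd_rfl)
        · intro hd; have := Nat.dvd_add hd dvd_rfl; rwa [Nat.sub_add_cancel h] at this
      by_cases hdd : j ∣ m
      · simp [hdd, this.mp hdd]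
      · rw [if_neg hdd, if_neg (fun hc => hdd (this.mpr hc))]
        ring
    · simp only [h, if_false, inv1, PowerSeries.coeff_mk]
      have : ¬ j ∣ m := fun hd => h (Nat.le_of_dvd hm hd)
      simp [this]

theorem isUnit_one_sub_X_pow (j : ℕ) (hj : 0 < j) : IsUnit (1 - X ^ j : R⟦X⟧) :=
  IsUnit.of_mul_eq_one _ (inv1_mul j hj)

theorem map_inv1 {S : Type*} [CommRing S] (f : R →+* S) (j : ℕ) :
    PowerSeries.map f (inv1 R j) = inv1 S j := by
  ext m; simp [inv1, apply_ite f]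


theorem dvd_mul_sub_mul' {d f g f' g' : R} (h : d ∣ f - g) (h' : d ∣ f' - g') :
    d ∣ f * f' - g * g' := by
  have : f * f' - g * g' = f * (f' - g') + (f - g) * g' := by ring
  rw [this]; exact dvd_add (Dvd.dvd.mul_left h' f) (h.mul_right g')

theorem dvd_prod_sub_prod {ι : Type*} (s : Finset ι) (f g : ι → R) (d : R)
    (h : ∀ i ∈ s, d ∣ f i - g i) : d ∣ ∏ i ∈ s, f i - ∏ i ∈ s, g i := by
  induction s using Finset.cons_induction with
  | empty => simp
  | cons a s ha ih =>
      rw [Finset.prod_cons, Finset.prod_cons]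
      exact dvd_mul_sub_mul' (h a (Finset.mem_cons_self a s))
        (ih fun i hi => h i (Finset.mem_cons.2 (Or.inr hi)))

theorem coeff_eq_of_dvd {f g : R⟦X⟧} {t r : ℕ} (h : (X : R⟦X⟧) ^ t ∣ f - g) (hr : r < t) :
    PowerSeries.coeff (R := R) r f = PowerSeries.coeff (R := R) r g := by
  have := (PowerSeries.X_pow_dvd_iff.1 h) r hr
  rw [map_sub, sub_eq_zero] at this
  exact this

theorem prod_split_even_odd (f : ℕ → R) (n : ℕ) :
    ∏ i ∈ range (2 * n), f i = (∏ i ∈ range n, f (2 * i)) * ∏ i ∈ range n, f (2 * i + 1) := by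
  induction n with
  | zero => simp
  | succ n ih =>
      have h2 : 2 * (n + 1) = (2 * n) + 1 + 1 := by ring
      rw [h2, Finset.prod_range_succ, Finset.prod_range_succ, ih,
        Finset.prod_range_succ, Finset.prod_range_succ]
      ring

/-- products of things ≡ 1 mod X^t -/
theorem dvd_prod_sub_one {ι : Type*} (s : Finset ι) (f : ι → R⟦X⟧) (t : ℕ)
    (h : ∀ i ∈ s, (X : R⟦X⟧) ^ t ∣ f i - 1) : (X : R⟦X⟧) ^ t ∣ (∏ i ∈ s, f i) - 1 := by
  have := dvd_prod_sub_prod s f (fun _ => 1) ((X : R⟦X⟧) ^ t) h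
  simpa using this

theorem coeff_mul_one_mod {f g : R⟦X⟧} {t r : ℕ} (h : (X : R⟦X⟧) ^ t ∣ g - 1) (hr : r < t) :
    PowerSeries.coeff (R := R) r (f * g) = PowerSeries.coeff (R := R) r f := by
  have : (X : R⟦X⟧) ^ t ∣ f * g - f * 1 := by
    have : f * g - f * 1 = f * (g - 1) := by ring
    rw [this]; exact Dvd.dvd.mul_left h f
  rw [mul_one] at this
  exact coeff_eq_of_dvd this hr

def gb (Q : R) : ℕ → ℕ → R
  | _, 0 => 1
  | 0, _+1 => 0
  | m+1, k+1 => gb Q m (k+1) + Q^(m-k) * gb Q m k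

@[simp] theorem gb_zero_right (Q : R) (m : ℕ) : gb Q m 0 = 1 := by cases m <;> rfl

theorem gb_eq_zero (Q : R) : ∀ {m k : ℕ}, m < k → gb Q m k = 0
  | 0, k+1, _ => rfl
  | m+1, k+1, h => by
      rw [gb, gb_eq_zero Q (by omega), gb_eq_zero Q (by omega), mul_zero, add_zero]

theorem gb_diag (Q : R) : ∀ m, gb Q m m = 1
  | 0 => rfl
  | m+1 => by rw [gb, gb_eq_zero Q (by omega), gb_diag Q m, Nat.sub_self, pow_zero,
      zero_add, one_mul]

def eE (m k : ℕ) : ℕ := Nat.choose k 2 + Nat.choose (m - k) 2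

theorem choose_two_succ (t : ℕ) : Nat.choose (t+1) 2 = Nat.choose t 2 + t := by
  rw [Nat.choose_succ_succ, Nat.choose_one_right, add_comm]

theorem eE_succ_succ (m k : ℕ) (hk : k ≤ m) : eE (m+1) (k+1) = eE m k + k := by
  unfold eE
  rw [choose_two_succ, Nat.succ_sub_succ]
  omega

theorem eE_left (m : ℕ) : eE (m+1) 0 = eE m 0 + m := by
  unfold eE
  simp [choose_two_succ]

theorem eE_mid (m k : ℕ) (hk : k < m) : eE m (k+1) + (m - k - 1) = eE (m+1) (k+1) := by
  rw [eE_succ_succ m k (le_of_lt hk)]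
  unfold eE
  rw [show m - (k+1) = m - k - 1 by omega, choose_two_succ]
  conv_rhs => rw [show m - k = (m - k - 1) + 1 by omega]
  rw [choose_two_succ]
  omega

theorem hqbinom (b v : R) : ∀ (m : ℕ) (a : R),
    ∏ j ∈ range m, (a * v^(m-1-j) + b * v^j)
      = ∑ k ∈ range (m+1), v^(eE m k) * gb (v^2) m k * a^(m-k) * b^k := by
  intro m
  induction m with
  | zero => intro a; simp [eE]
  | succ m ih =>
      intro a
      have hL : ∏ j ∈ range (m+1), (a * v^(m+1-1-j) + b * v^j)
          = (∏ j ∈ range m, ((a*v) * v^(m-1-j) + b * v^j)) * (a + b * v^m) := by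
        rw [Finset.prod_range_succ]
        congr 1
        · apply Finset.prod_congr rfl
          intro j hj
          have hj' : j < m := Finset.mem_range.1 hj
          have : m + 1 - 1 - j = (m - 1 - j) + 1 := by omega
          rw [this, pow_succ]
          ring
        · have : m + 1 - 1 - m = 0 := by omega
          rw [this, pow_zero, mul_one]
      rw [hL, ih (a*v)]
      -- expand target
      rw [Finset.sum_range_succ' (fun k => v^(eE (m+1) k) * gb (v^2) (m+1) k * a^(m+1-k) * b^k) (m+1)]
      -- target now: ∑_{k∈range(m+1)} term(k+1) + term 0
      have hrec : ∀ k, gb (v^2) (m+1) (k+1) = gb (v^2) m (k+1) + (v^2)^(m-k) * gb (v^2) m k := by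
        intro k; rfl
      have expand : ∀ k ∈ range (m+1),
          v^(eE (m+1) (k+1)) * gb (v^2) (m+1) (k+1) * a^(m+1-(k+1)) * b^(k+1)
          = (v^(eE (m+1) (k+1)) * gb (v^2) m (k+1) * a^(m-k) * b^(k+1))
            + (v^(eE (m+1) (k+1)) * (v^2)^(m-k) * gb (v^2) m k * a^(m-k) * b^(k+1)) := by
        intro k hk
        rw [hrec k]
        have : m + 1 - (k+1) = m - k := by omega
        rw [this]; ring
      rw [Finset.sum_congr rfl expand, Finset.sum_add_distrib]
      -- LHS expand
      rw [mul_add]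
      rw [Finset.sum_mul, Finset.sum_mul]
      -- claim A : b*v^m parts agree
      have claimA : (∑ k ∈ range (m+1), v^(eE m k) * gb (v^2) m k * (a*v)^(m-k) * b^k * (b * v^m))
          = ∑ k ∈ range (m+1), v^(eE (m+1) (k+1)) * (v^2)^(m-k) * gb (v^2) m k * a^(m-k) * b^(k+1) := by
        apply Finset.sum_congr rfl
        intro k hk
        have hk' : k ≤ m := by have := Finset.mem_range.1 hk; omega
        rw [mul_pow, ← pow_mul, eE_succ_succ m k hk',
          show (v:R)^m = v^(m-k) * v^k from by rw [← pow_add]; congr 1; omega,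
          show (v:R)^(2*(m-k)) = v^(m-k) * v^(m-k) from by rw [← pow_add]; congr 1; omega,
          show (v:R)^(eE m k + k) = v^(eE m k) * v^k from by rw [← pow_add]]
        ring
      -- claim B : a parts agree
      have claimB : (∑ k ∈ range (m+1), v^(eE m k) * gb (v^2) m k * (a*v)^(m-k) * b^k * a)
          = (∑ k ∈ range (m+1), v^(eE (m+1) (k+1)) * gb (v^2) m (k+1) * a^(m-k) * b^(k+1))
            + v^(eE (m+1) 0) * gb (v^2) (m+1) 0 * a^(m+1-0) * b^0 := by
        rw [Finset.sum_range_succ' (fun k => v^(eE m k) * gb (v^2) m k * (a*v)^(m-k) * b^k * a) m,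
          Finset.sum_range_succ (fun k => v^(eE (m+1) (k+1)) * gb (v^2) m (k+1) * a^(m-k) * b^(k+1)) m,
          gb_eq_zero (v^2) (Nat.lt_succ_self m)]
        have h0 : v^(eE m 0) * gb (v^2) m 0 * (a*v)^(m-0) * b^0 * a
            = v^(eE (m+1) 0) * gb (v^2) (m+1) 0 * a^(m+1-0) * b^0 := by
          rw [eE_left, gb_zero_right, gb_zero_right, Nat.sub_zero, Nat.sub_zero, mul_pow, pow_add]
          ring
        have hmid : ∀ k ∈ range m,
            v^(eE m (k+1)) * gb (v^2) m (k+1) * (a*v)^(m-(k+1)) * b^(k+1) * a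
            = v^(eE (m+1) (k+1)) * gb (v^2) m (k+1) * a^(m-k) * b^(k+1) := by
          intro k hk
          have hk' : k < m := Finset.mem_range.1 hk
          rw [← eE_mid m k hk', pow_add, mul_pow, show m - (k+1) = m - k - 1 by omega,
            show a^(m-k) = a^(m-k-1) * a from by rw [← pow_succ]; congr 1; omega]
          ring
        rw [Finset.sum_congr rfl hmid, h0]
        ring
      rw [claimA, claimB]
      ring

theorem gb_mul_poch (Q : R) : ∀ m k : ℕ, k ≤ m →
    gb Q m k * ∏ j ∈ range k, (1 - Q^(j+1)) = ∏ j ∈ range k, (1 - Q^(m-k+j+1)) := by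
  intro m
  induction m with
  | zero => intro k hk; interval_cases k; simp
  | succ m ih =>
      intro k hk
      match k with
      | 0 => simp
      | k'+1 =>
        rcases Nat.lt_or_ge k' m with hlt | hge
        · -- k' < m
          have h1 : gb Q (m+1) (k'+1) = gb Q m (k'+1) + Q^(m-k') * gb Q m k' := rfl
          have hx : ∀ j, m - (k'+1) + (j+1) + 1 = m - k' + j + 1 := by intro j; omega
          have hy : m - (k'+1) + 0 + 1 = m - k' := by omega
          have hz : ∀ j, m + 1 - (k'+1) + j + 1 = m - k' + j + 1 := by intro j; omega
          have e1 : gb Q m (k'+1) * ∏ j ∈ range (k'+1), (1 - Q^(j+1))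
              = (1 - Q^(m-k')) * ∏ j ∈ range k', (1 - Q^(m-k'+j+1)) := by
            rw [ih (k'+1) hlt, Finset.prod_range_succ' (fun j => (1 - Q^(m-(k'+1)+j+1))) k']
            rw [hy, Finset.prod_congr rfl (fun (j : ℕ) (_ : j ∈ range k') => by
              rw [hx j] : ∀ j ∈ range k', (1 - Q^(m-(k'+1)+(j+1)+1)) = 1 - Q^(m-k'+j+1))]
            ring
          have e2 : gb Q m k' * ∏ j ∈ range k', (1 - Q^(j+1))
              = ∏ j ∈ range k', (1 - Q^(m-k'+j+1)) := ih k' (le_of_lt hlt)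
          have etarget : ∏ j ∈ range (k'+1), (1 - Q^(m+1-(k'+1)+j+1))
              = (∏ j ∈ range k', (1 - Q^(m-k'+j+1))) * (1 - Q^(m-k') * Q^(k'+1)) := by
            rw [Finset.prod_congr rfl (fun (j : ℕ) (_ : j ∈ range (k'+1)) => by
              rw [hz j] : ∀ j ∈ range (k'+1), (1 - Q^(m+1-(k'+1)+j+1)) = 1 - Q^(m-k'+j+1))]
            rw [Finset.prod_range_succ, ← pow_add,
              show m - k' + (k'+1) = m + 1 by omega]
            rw [show m - k' + k' + 1 = m + 1 by omega]
          rw [h1, add_mul, etarget]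
          calc gb Q m (k'+1) * ∏ j ∈ range (k'+1), (1 - Q^(j+1))
                + Q^(m-k') * gb Q m k' * ∏ j ∈ range (k'+1), (1 - Q^(j+1))
              = gb Q m (k'+1) * ∏ j ∈ range (k'+1), (1 - Q^(j+1))
                + Q^(m-k') * (1 - Q^(k'+1)) * (gb Q m k' * ∏ j ∈ range k', (1 - Q^(j+1))) := by
                rw [Finset.prod_range_succ]; ring
            _ = (1 - Q^(m-k')) * (∏ j ∈ range k', (1 - Q^(m-k'+j+1)))
                + Q^(m-k') * (1 - Q^(k'+1)) * ∏ j ∈ range k', (1 - Q^(m-k'+j+1)) := by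
                rw [e1, e2]
            _ = (∏ j ∈ range k', (1 - Q^(m-k'+j+1))) * (1 - Q^(m-k') * Q^(k'+1)) := by ring
        · -- k' ≥ m, so k'+1 = m+1
          have hk' : k' = m := by omega
          subst hk'
          rw [gb_diag, one_mul]
          apply Finset.prod_congr rfl
          intro j _
          congr 2
          omega
theorem sum_odds (n : ℕ) : ∑ j ∈ range n, (2*j+1) = n*n := by
  induction n with
  | zero => simp
  | succ n ih =>
      calc ∑ j ∈ range (n+1), (2*j+1) = (∑ j ∈ range n, (2*j+1)) + (2*n+1) :=
            Finset.sum_range_succ _ n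
        _ = n*n + (2*n+1) := by rw [ih]
        _ = (n+1)*(n+1) := by ring

theorem sum_evens (n : ℕ) : (∑ j ∈ range n, 2*j) + n = n*n := by
  induction n with
  | zero => simp
  | succ n ih =>
      calc (∑ j ∈ range (n+1), 2*j) + (n+1) = ((∑ j ∈ range n, 2*j) + n) + (2*n+1) := by
            rw [Finset.sum_range_succ]; ring
        _ = n*n + (2*n+1) := by rw [ih]
        _ = (n+1)*(n+1) := by ring

theorem gauss_prod (n : ℕ) :
    (X:R⟦X⟧)^(2*(n*n) - n) * ((∏ j ∈ range n, (1 + X^(4*j+3))) * ∏ j ∈ range n, (1 + X^(4*j+1)))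
      = ∑ k ∈ range (n+n+1), (X:R⟦X⟧)^(2 * eE (n+n) k) * gb ((X:R⟦X⟧)^4) (n+n) k
          * X^(n+n-k) := by
  have H := hqbinom (1:R⟦X⟧) ((X:R⟦X⟧)^2) (n+n) X
  -- transform the RHS of H
  have hR : ∀ k ∈ range (n+n+1),
      ((X:R⟦X⟧)^2)^(eE (n+n) k) * gb (((X:R⟦X⟧)^2)^2) (n+n) k * X^(n+n-k) * (1:R⟦X⟧)^k
      = (X:R⟦X⟧)^(2 * eE (n+n) k) * gb ((X:R⟦X⟧)^4) (n+n) k * X^(n+n-k) := by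
    intro k _
    rw [one_pow, mul_one, show ((X:R⟦X⟧)^2)^2 = X^4 from by rw [← pow_mul],
      show ((X:R⟦X⟧)^2)^(eE (n+n) k) = X^(2 * eE (n+n) k) from by rw [← pow_mul]]
  rw [Finset.sum_congr rfl hR] at H
  -- transform the LHS of H
  have h1 : ∀ j ∈ range n, (X:R⟦X⟧) * ((X:R⟦X⟧)^2)^(n+n-1-j) + 1 * ((X:R⟦X⟧)^2)^j
      = X^(2*j) * (1 + X^(4*(n-1-j)+3)) := by
    intro j hj
    have hj' : j < n := Finset.mem_range.1 hj
    rw [one_mul, ← pow_mul, ← pow_mul, mul_add, mul_one, ← pow_add, ← pow_succ',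
      show 2*(n+n-1-j) + 1 = 2*j + (4*(n-1-j)+3) by omega, add_comm]
  have h2 : ∀ j ∈ range n, (X:R⟦X⟧) * ((X:R⟦X⟧)^2)^(n+n-1-(n+j)) + 1 * ((X:R⟦X⟧)^2)^(n+j)
      = X^(2*(n-1-j)+1) * (1 + X^(4*j+1)) := by
    intro j hj
    have hj' : j < n := Finset.mem_range.1 hj
    have hr : (X:R⟦X⟧)^(2*(n-1-j)+1) * (1 + X^(4*j+1)) = X^(2*(n-1-j)+1) + X^(2*(n+j)) := by
      rw [mul_add, mul_one, ← pow_add, show 2*(n-1-j)+1+(4*j+1) = 2*(n+j) by omega]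
    rw [one_mul, ← pow_mul, ← pow_mul, show 2*(n+n-1-(n+j)) = 2*(n-1-j) by omega, hr,
      ← pow_succ']
  rw [Finset.prod_range_add (fun j => (X:R⟦X⟧) * ((X:R⟦X⟧)^2)^(n+n-1-j) + 1 * ((X:R⟦X⟧)^2)^j) n n,
    Finset.prod_congr rfl h1, Finset.prod_congr rfl h2] at H
  rw [Finset.prod_mul_distrib, Finset.prod_mul_distrib] at H
  rw [Finset.prod_pow_eq_pow_sum, Finset.prod_pow_eq_pow_sum] at H
  rw [Finset.prod_range_reflect (fun j => (1:R⟦X⟧) + X^(4*j+3)) n] at H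
  rw [show (∑ j ∈ range n, (2*(n-1-j)+1)) = ∑ j ∈ range n, (2*j+1) from
    Finset.sum_range_reflect (fun j => 2*j+1) n] at H
  rw [sum_odds] at H
  obtain ⟨t, ht⟩ : ∃ t, n*n = t := ⟨_, rfl⟩
  have htn : n ≤ t := by have h := sum_evens n; rw [ht] at h; omega
  have hs : (∑ j ∈ range n, 2*j) = 2*t - n - t := by
    have h := sum_evens n; rw [ht] at h; omega
  rw [hs, ht] at H
  rw [ht]
  calc (X:R⟦X⟧)^(2*t - n) * ((∏ j ∈ range n, (1 + X^(4*j+3))) * ∏ j ∈ range n, (1 + X^(4*j+1)))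
      = ((X:R⟦X⟧)^(2*t - n - t) * ∏ j ∈ range n, (1 + X^(4*j+3)))
        * ((X:R⟦X⟧)^t * ∏ j ∈ range n, (1 + X^(4*j+1))) := by
        rw [show (X:R⟦X⟧)^(2*t - n) = X^(2*t - n - t) * X^t from by
          rw [← pow_add]; congr 1; omega]
        ring
    _ = _ := H
theorem two_choose_two (k : ℕ) : 2 * Nat.choose k 2 + k = k*k := by
  induction k with
  | zero => simp
  | succ k ih =>
      obtain ⟨t, ht⟩ : ∃ t, k*k = t := ⟨_, rfl⟩
      rw [ht] at ih
      rw [choose_two_succ, show (k+1)*(k+1) = t + 2*k + 1 from by rw [← ht]; ring]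
      omega

theorem E_closed (m k : ℕ) : (2 * eE m k + (m-k)) + k = k*k + (m-k)*(m-k) := by
  unfold eE
  have h1 := two_choose_two k
  have h2 := two_choose_two (m-k)
  obtain ⟨a, ha⟩ : ∃ a, k*k = a := ⟨_, rfl⟩
  obtain ⟨b, hb⟩ : ∃ b, (m-k)*(m-k) = b := ⟨_, rfl⟩
  rw [ha] at h1 ⊢
  rw [hb] at h2 ⊢
  omega

set_option maxHeartbeats 1600000 in
theorem keyG (n r : ℕ) (hr : r ≤ 2*n) (h3 : r % 3 = 2) :
    PowerSeries.coeff (R := R) r ((∏ i ∈ range (n+n), (1 + (X:R⟦X⟧)^(2*i+1)))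
      * ∏ j ∈ range (n+n), (1 - (X:R⟦X⟧)^(4*(j+1)))) = 0 := by
  rcases Nat.eq_zero_or_pos n with rfl | hn
  · omega
  have hle : n ≤ 2*(n*n) := by nlinarith
  set A : R⟦X⟧ := ∏ i ∈ range (n+n), (1 + (X:R⟦X⟧)^(2*i+1)) with hA
  set F : R⟦X⟧ := ∏ j ∈ range (n+n), (1 - (X:R⟦X⟧)^(4*(j+1))) with hF
  set D : ℕ := r + (2*(n*n) - n) with hD
  -- write F with base X^4
  have hF4 : F = ∏ j ∈ range (n+n), (1 - ((X:R⟦X⟧)^4)^(j+1)) := by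
    apply Finset.prod_congr rfl
    intro j _
    rw [← pow_mul]
  -- split A into the two residue classes
  have hAsplit : A = (∏ j ∈ range n, (1 + (X:R⟦X⟧)^(4*j+3)))
      * ∏ j ∈ range n, (1 + (X:R⟦X⟧)^(4*j+1)) := by
    rw [hA, show n + n = 2*n by ring, prod_split_even_odd (fun i => 1 + (X:R⟦X⟧)^(2*i+1)) n]
    rw [Finset.prod_congr rfl (fun (j : ℕ) (_ : j ∈ range n) => by
        rw [show 2*(2*j)+1 = 4*j+1 by ring] :
        ∀ j ∈ range n, (1 + (X:R⟦X⟧)^(2*(2*j)+1)) = 1 + (X:R⟦X⟧)^(4*j+1)),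
      Finset.prod_congr rfl (fun (j : ℕ) (_ : j ∈ range n) => by
        rw [show 2*(2*j+1)+1 = 4*j+3 by ring] :
        ∀ j ∈ range n, (1 + (X:R⟦X⟧)^(2*(2*j+1)+1)) = 1 + (X:R⟦X⟧)^(4*j+3))]
    ring
  -- main identity
  have hmain : (X:R⟦X⟧)^(2*(n*n) - n) * (A * F)
      = ∑ k ∈ range (n+n+1), ((X:R⟦X⟧)^(2 * eE (n+n) k + (n+n-k))
          * (gb ((X:R⟦X⟧)^4) (n+n) k * F)) := by
    calc (X:R⟦X⟧)^(2*(n*n) - n) * (A * F)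
        = ((X:R⟦X⟧)^(2*(n*n) - n) * A) * F := by ring
      _ = (∑ k ∈ range (n+n+1), (X:R⟦X⟧)^(2 * eE (n+n) k) * gb ((X:R⟦X⟧)^4) (n+n) k
            * X^(n+n-k)) * F := by rw [hAsplit, gauss_prod n]
      _ = _ := by
          rw [Finset.sum_mul]
          apply Finset.sum_congr rfl
          intro k _
          rw [pow_add]
          ring
  -- coefficient extraction
  have hcoeff : PowerSeries.coeff (R := R) r (A * F)
      = PowerSeries.coeff (R := R) D ((X:R⟦X⟧)^(2*(n*n) - n) * (A * F)) := by
    rw [hD, PowerSeries.coeff_X_pow_mul]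
  rw [hcoeff, hmain, map_sum]
  apply Finset.sum_eq_zero
  intro k hk
  have hk' : k ≤ n + n := by have := Finset.mem_range.1 hk; omega
  set Ek : ℕ := 2 * eE (n+n) k + (n+n-k) with hEk
  set u : R⟦X⟧ := gb ((X:R⟦X⟧)^4) (n+n) k * F with hu
  -- u is 1 + higher order terms
  have hudvd : (X:R⟦X⟧)^(4 * (min k (n+n-k)) + 4) ∣ u - 1 := by
    have hsplitF : F = (∏ j ∈ range k, (1 - ((X:R⟦X⟧)^4)^(j+1)))
        * ∏ j ∈ Ico k (n+n), (1 - ((X:R⟦X⟧)^4)^(j+1)) := by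
      rw [hF4, Finset.prod_range_mul_prod_Ico _ hk']
    have hPL : gb ((X:R⟦X⟧)^4) (n+n) k * ∏ j ∈ range k, (1 - ((X:R⟦X⟧)^4)^(j+1))
        = ∏ j ∈ range k, (1 - ((X:R⟦X⟧)^4)^(n+n-k+j+1)) := gb_mul_poch _ (n+n) k hk'
    have hu2 : u = (∏ j ∈ range k, (1 - ((X:R⟦X⟧)^4)^(n+n-k+j+1)))
        * ∏ j ∈ Ico k (n+n), (1 - ((X:R⟦X⟧)^4)^(j+1)) := by
      rw [hu, hsplitF, ← mul_assoc, hPL]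
    rw [hu2]
    have d1 : (X:R⟦X⟧)^(4 * (min k (n+n-k)) + 4)
        ∣ (∏ j ∈ range k, (1 - ((X:R⟦X⟧)^4)^(n+n-k+j+1))) - 1 := by
      apply dvd_prod_sub_one
      intro j _
      rw [show (1:R⟦X⟧) - ((X:R⟦X⟧)^4)^(n+n-k+j+1) - 1 = -(((X:R⟦X⟧)^4)^(n+n-k+j+1)) by ring]
      apply dvd_neg.2
      rw [← pow_mul]
      exact pow_dvd_pow X (by have := Nat.min_le_right k (n+n-k); omega)
    have d2 : (X:R⟦X⟧)^(4 * (min k (n+n-k)) + 4)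
        ∣ (∏ j ∈ Ico k (n+n), (1 - ((X:R⟦X⟧)^4)^(j+1))) - 1 := by
      apply dvd_prod_sub_one
      intro j hj
      have hjk : k ≤ j := (Finset.mem_Ico.1 hj).1
      rw [show (1:R⟦X⟧) - ((X:R⟦X⟧)^4)^(j+1) - 1 = -(((X:R⟦X⟧)^4)^(j+1)) by ring]
      apply dvd_neg.2
      rw [← pow_mul]
      exact pow_dvd_pow X (by have := Nat.min_le_left k (n+n-k); omega)
    have := dvd_mul_sub_mul' d1 d2
    rwa [one_mul] at this
  -- cast facts
  have hc1 : ((n+n-k : ℕ):ℤ) = 2*(n:ℤ) - (k:ℤ) := by omega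
  have hEcast : ((Ek:ℕ):ℤ)
      = (k:ℤ)*(k:ℤ) + (2*(n:ℤ)-(k:ℤ))*(2*(n:ℤ)-(k:ℤ)) - (k:ℤ) := by
    have h := congrArg (fun x : ℕ => (x:ℤ)) (E_closed (n+n) k)
    push_cast at h
    rw [hc1] at h
    have hEk' : ((Ek:ℕ):ℤ) = 2*(eE (n+n) k : ℤ) + (2*(n:ℤ)-(k:ℤ)) := by
      rw [hEk]; push_cast; rw [hc1]
    linarith [h, hEk']
  obtain ⟨t, ht⟩ : ∃ t, n*n = t := ⟨_, rfl⟩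
  rw [ht] at hD hle
  have htZ : (t:ℤ) = (n:ℤ)*(n:ℤ) := by exact_mod_cast ht.symm
  have hDcast : ((D:ℕ):ℤ) = (r:ℤ) + 2*(t:ℤ) - (n:ℤ) := by omega
  have hkZ0 : (0:ℤ) ≤ (k:ℤ) := by positivity
  have hrr : ((r:ℤ)) ≤ 2*(n:ℤ) := by exact_mod_cast hr
  have hnZ : (1:ℤ) ≤ (n:ℤ) := by exact_mod_cast hn
  -- now the coefficient of each term vanishes
  rw [PowerSeries.coeff_X_pow_mul']
  by_cases hED : Ek ≤ D
  · rw [if_pos hED]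
    have hDneq : D ≠ Ek := by
      intro heq
      have heqZ : ((D:ℕ):ℤ) = ((Ek:ℕ):ℤ) := by omega
      have hr2 : (r:ℤ) = 2*((k:ℤ)-(n:ℤ))^2 - ((k:ℤ)-(n:ℤ)) := by
        linear_combination heqZ - hDcast + hEcast - 2*htZ
      set s : ℤ := (k:ℤ) - n with hs
      have hqc : s = 3*(s/3) + s % 3 := by omega
      set c : ℤ := s % 3 with hc
      set q : ℤ := s / 3 with hq
      have hc0 : 0 ≤ c := by omega
      have hc3 : c < 3 := by omega
      have hdvd : (3:ℤ) ∣ ((r:ℤ) - (2*c^2 - c)) := ⟨6*q^2 + 4*q*c - q, by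
        rw [hr2, hqc]; push_cast; ring⟩
      have hr3 : (r:ℤ) % 3 = 2 := by omega
      interval_cases c <;> (norm_num at hdvd; omega)
    have hsmall : D - Ek < 4 * (min k (n+n-k)) + 4 := by
      rcases le_or_gt k n with hkn | hkn
      · rw [min_eq_left (by omega : k ≤ n+n-k)]
        have hkk : ((k:ℤ)) ≤ (n:ℤ) := by exact_mod_cast hkn
        have hZ : ((D:ℕ):ℤ) < ((Ek:ℕ):ℤ) + 4*(k:ℤ) + 4 := by
          rw [hDcast, hEcast, htZ]
          nlinarith [sq_nonneg ((n:ℤ)-(k:ℤ)-1), hrr, hkk, hkZ0, hnZ]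
        omega
      · rw [min_eq_right (by omega : n+n-k ≤ k)]
        have hkk : ((n:ℤ)) < (k:ℤ) := by exact_mod_cast hkn
        have hkk2 : ((k:ℤ)) ≤ 2*(n:ℤ) := by exact_mod_cast (by omega : k ≤ 2*n)
        have hZ : ((D:ℕ):ℤ) < ((Ek:ℕ):ℤ) + 4*((n+n-k:ℕ):ℤ) + 4 := by
          rw [hc1, hDcast, hEcast, htZ]
          nlinarith [sq_nonneg ((k:ℤ)-(n:ℤ)-1), hrr, hkk, hkk2, hnZ]
        omega
    have hu1 : u = 1 + (u - 1) := by ring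
    rw [hu1, map_add, PowerSeries.coeff_one,
      if_neg (by omega : ¬ (D - Ek = 0)),
      (PowerSeries.X_pow_dvd_iff.1 hudvd) (D - Ek) hsmall]
    ring
  · rw [if_neg hED]
theorem factor_id (h3 : (3:R⟦X⟧) = 0) (j : ℕ) (hj : 0 < j) :
    ((1:R⟦X⟧) + X^j)^2 * (inv1 R j)^2
      = (1 - X^(2*j))^2 * inv1 R j * inv1 R (3*j) := by
  have hunit : IsUnit (((1:R⟦X⟧) - X^j)^2 * (1 - X^(3*j))) :=
    ((isUnit_one_sub_X_pow j hj).pow 2).mul (isUnit_one_sub_X_pow (3*j) (by omega))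
  have e1 : ((1:R⟦X⟧) - X^j) * inv1 R j = 1 := inv1_mul j hj
  have e3 : ((1:R⟦X⟧) - X^(3*j)) * inv1 R (3*j) = 1 := inv1_mul (3*j) (by omega)
  have key : ((1:R⟦X⟧)+X^j)^2 * (1-X^(3*j)) = (1-X^j) * (1-X^(2*j))^2 := by
    rw [show (X:R⟦X⟧)^(2*j) = (X^j)^2 from by rw [← pow_mul, mul_comm],
      show (X:R⟦X⟧)^(3*j) = (X^j)^3 from by rw [← pow_mul, mul_comm]]
    linear_combination ((X:R⟦X⟧)^j + (X^j)^2 - (X^j)^3 - (X^j)^4) * h3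
  apply hunit.mul_left_cancel
  calc (((1:R⟦X⟧) - X^j)^2 * (1 - X^(3*j))) * (((1:R⟦X⟧) + X^j)^2 * (inv1 R j)^2)
      = (((1:R⟦X⟧) - X^j) * inv1 R j)^2 * (((1:R⟦X⟧)+X^j)^2 * (1-X^(3*j))) := by ring
    _ = ((1:R⟦X⟧)+X^j)^2 * (1-X^(3*j)) := by rw [e1, one_pow, one_mul]
    _ = (1-X^j) * (1-X^(2*j))^2 := key
    _ = (((1:R⟦X⟧) - X^j) * inv1 R j) * (((1:R⟦X⟧) - X^(3*j)) * inv1 R (3*j))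
          * ((1-X^j) * (1-X^(2*j))^2) := by rw [e1, e3]; ring
    _ = (((1:R⟦X⟧) - X^j)^2 * (1 - X^(3*j)))
          * ((1 - X^(2*j))^2 * inv1 R j * inv1 R (3*j)) := by ring

theorem factor2 (j : ℕ) (hj : 0 < j) :
    ((1:R⟦X⟧) - X^(2*j))^2 * inv1 R j = (1 + X^j) * (1 - X^(2*j)) := by
  have e1 : ((1:R⟦X⟧) - X^j) * inv1 R j = 1 := inv1_mul j hj
  have hsq : ((1:R⟦X⟧) - X^(2*j)) = (1 - X^j) * (1 + X^j) := by
    rw [show (X:R⟦X⟧)^(2*j) = (X^j)^2 from by rw [← pow_mul, mul_comm]]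
    ring
  calc ((1:R⟦X⟧) - X^(2*j))^2 * inv1 R j
      = (((1:R⟦X⟧) - X^j) * inv1 R j) * ((1 + X^j) * (1 - X^(2*j))) := by
        nth_rewrite 1 [hsq]; ring
    _ = (1 + X^j) * (1 - X^(2*j)) := by rw [e1, one_mul]

/-- products of `inv1 (3*j)` have coefficients supported on multiples of 3. -/
theorem suppH (s : Finset ℕ) (g : ℕ → ℕ) :
    ∀ m, ¬ (3 ∣ m) → PowerSeries.coeff (R := R) m (∏ k ∈ s, inv1 R (3 * g k)) = 0 := by
  classical
  refine Finset.prod_induction (fun k => inv1 R (3 * g k))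
    (fun f => ∀ m, ¬ (3 ∣ m) → PowerSeries.coeff (R := R) m f = 0) ?_ ?_ ?_
  · intro a b ha hb m hm
    rw [PowerSeries.coeff_mul]
    apply Finset.sum_eq_zero
    intro q hq
    have hqm : q.1 + q.2 = m := Finset.HasAntidiagonal.mem_antidiagonal.1 hq
    by_cases h1 : 3 ∣ q.1
    · rw [hb q.2 (by omega), mul_zero]
    · rw [ha q.1 h1, zero_mul]
  · intro m hm
    rw [PowerSeries.coeff_one, if_neg (by rintro rfl; exact hm ⟨0, rfl⟩)]
  · intro k _ m hm
    simp only [inv1, PowerSeries.coeff_mk]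
    rw [if_neg (fun hd => hm (dvd_trans ⟨g k, rfl⟩ hd))]

theorem coeffG_eq_zero (M a : ℕ) (haM : a < M) (h3a : a % 3 = 2) :
    PowerSeries.coeff (R := R) a (∏ k ∈ range M, ((1 + X^(k+1)) * (1 - X^(2*(k+1))))) = 0 := by
  have hstep1 : PowerSeries.coeff (R := R) a (∏ k ∈ range M, ((1 + X^(k+1)) * (1 - X^(2*(k+1)))))
      = PowerSeries.coeff (R := R) a (∏ k ∈ range (M+M), ((1 + X^(k+1)) * (1 - X^(2*(k+1))))) := by
    rw [Finset.prod_range_add (fun k => ((1:R⟦X⟧) + X^(k+1)) * (1 - X^(2*(k+1)))) M M]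
    rw [coeff_mul_one_mod (t := a+1) ?hdvd (lt_add_one a)]
    case hdvd =>
      apply dvd_prod_sub_one
      intro j _
      have hident : ((1:R⟦X⟧) + X^(M+j+1)) * (1 - X^(2*(M+j+1))) - 1
          = X^(M+j+1) * (1 - X^(M+j+1) - X^(2*(M+j+1))) := by
        rw [show 2*(M+j+1) = (M+j+1) + (M+j+1) by ring, pow_add]
        ring
      rw [hident]
      exact dvd_mul_of_dvd_left (pow_dvd_pow X (by omega)) _
  have hexact : (∏ k ∈ range (M+M), (((1:R⟦X⟧) + X^(k+1)) * (1 - X^(2*(k+1)))))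
      = ((∏ i ∈ range M, ((1:R⟦X⟧) + X^(2*i+1))) * ∏ i ∈ range M, ((1:R⟦X⟧) - X^(4*(i+1))))
        * ∏ j ∈ range M, ((1:R⟦X⟧) - X^(2*(M+j+1))) := by
    rw [Finset.prod_mul_distrib]
    have hsp : (∏ k ∈ range (M+M), ((1:R⟦X⟧) + X^(k+1)))
        = (∏ i ∈ range M, ((1:R⟦X⟧) + X^(2*i+1))) * ∏ i ∈ range M, ((1:R⟦X⟧) + X^(2*i+1+1)) := by
      have h := prod_split_even_odd (fun k => ((1:R⟦X⟧) + X^(k+1))) M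
      rw [two_mul] at h
      exact h
    have hsp2 : (∏ k ∈ range (M+M), ((1:R⟦X⟧) - X^(2*(k+1))))
        = (∏ i ∈ range M, ((1:R⟦X⟧) - X^(2*(i+1)))) * ∏ j ∈ range M, ((1:R⟦X⟧) - X^(2*(M+j+1))) :=
      Finset.prod_range_add (fun k => ((1:R⟦X⟧) - X^(2*(k+1)))) M M
    rw [hsp, hsp2]
    have hpair : (∏ i ∈ range M, ((1:R⟦X⟧) + X^(2*i+1+1))) * ∏ i ∈ range M, ((1:R⟦X⟧) - X^(2*(i+1)))
        = ∏ i ∈ range M, ((1:R⟦X⟧) - X^(4*(i+1))) := by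
      rw [← Finset.prod_mul_distrib]
      apply Finset.prod_congr rfl
      intro i _
      rw [show 2*i+1+1 = 2*(i+1) by ring,
        show 4*(i+1) = 2*(i+1) + 2*(i+1) by ring, pow_add]
      ring
    rw [← hpair]
    ring
  have hstep2 : PowerSeries.coeff (R := R) a
      (((∏ i ∈ range M, ((1:R⟦X⟧) + X^(2*i+1))) * ∏ i ∈ range M, ((1:R⟦X⟧) - X^(4*(i+1))))
        * ∏ j ∈ range M, ((1:R⟦X⟧) - X^(2*(M+j+1))))
      = PowerSeries.coeff (R := R) a
        ((∏ i ∈ range M, ((1:R⟦X⟧) + X^(2*i+1))) * ∏ i ∈ range M, ((1:R⟦X⟧) - X^(4*(i+1)))) := by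
    apply coeff_mul_one_mod (t := a+1) ?hdvd2 (lt_add_one a)
    case hdvd2 =>
      apply dvd_prod_sub_one
      intro j _
      rw [show (1:R⟦X⟧) - X^(2*(M+j+1)) - 1 = -(X^(2*(M+j+1))) by ring]
      exact dvd_neg.2 (pow_dvd_pow X (by omega))
  have hstep3 : PowerSeries.coeff (R := R) a
      ((∏ i ∈ range M, ((1:R⟦X⟧) + X^(2*i+1))) * ∏ i ∈ range M, ((1:R⟦X⟧) - X^(4*(i+1))))
      = PowerSeries.coeff (R := R) a
        ((∏ i ∈ range (M+M), ((1:R⟦X⟧) + X^(2*i+1))) * ∏ i ∈ range (M+M), ((1:R⟦X⟧) - X^(4*(i+1)))) := by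
    rw [Finset.prod_range_add (fun i => ((1:R⟦X⟧) + X^(2*i+1))) M M,
      Finset.prod_range_add (fun i => ((1:R⟦X⟧) - X^(4*(i+1)))) M M]
    rw [show ((∏ i ∈ range M, ((1:R⟦X⟧) + X^(2*i+1))) * ∏ j ∈ range M, ((1:R⟦X⟧) + X^(2*(M+j)+1)))
        * ((∏ i ∈ range M, ((1:R⟦X⟧) - X^(4*(i+1)))) * ∏ j ∈ range M, ((1:R⟦X⟧) - X^(4*(M+j+1))))
        = ((∏ i ∈ range M, ((1:R⟦X⟧) + X^(2*i+1))) * ∏ i ∈ range M, ((1:R⟦X⟧) - X^(4*(i+1))))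
          * ((∏ j ∈ range M, ((1:R⟦X⟧) + X^(2*(M+j)+1))) * ∏ j ∈ range M, ((1:R⟦X⟧) - X^(4*(M+j+1))))
        from by ring]
    refine (coeff_mul_one_mod (t := a+1) ?_ (lt_add_one a)).symm
    · have d1 : (X:R⟦X⟧)^(a+1) ∣ (∏ j ∈ range M, ((1:R⟦X⟧) + X^(2*(M+j)+1))) - 1 := by
        apply dvd_prod_sub_one
        intro j _
        rw [show (1:R⟦X⟧) + X^(2*(M+j)+1) - 1 = X^(2*(M+j)+1) by ring]
        exact pow_dvd_pow X (by omega)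
      have d2 : (X:R⟦X⟧)^(a+1) ∣ (∏ j ∈ range M, ((1:R⟦X⟧) - X^(4*(M+j+1)))) - 1 := by
        apply dvd_prod_sub_one
        intro j _
        rw [show (1:R⟦X⟧) - X^(4*(M+j+1)) - 1 = -(X^(4*(M+j+1))) by ring]
        exact dvd_neg.2 (pow_dvd_pow X (by omega))
      have := dvd_mul_sub_mul' d1 d2
      rwa [one_mul] at this
  rw [hstep1, hexact, hstep2, hstep3]
  exact keyG M a (by omega) h3a

theorem coeffZ3 (N : ℕ) (hN : N % 3 = 2) :
    PowerSeries.coeff (R := (ZMod 3)) N (∏ k ∈ range (N+1),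
      ((1 + (X : (ZMod 3)⟦X⟧)^(k+1))^2 * (inv1 (ZMod 3) (k+1))^2)) = 0 := by
  have h3 : (3 : (ZMod 3)⟦X⟧) = 0 := by
    rw [← map_ofNat (PowerSeries.C (R := ZMod 3)) 3, show ((3:ZMod 3) : ZMod 3) = 0 from rfl, map_zero]
  rw [Finset.prod_congr rfl (fun k (_ : k ∈ range (N+1)) =>
    factor_id h3 (k+1) (Nat.succ_pos k))]
  rw [Finset.prod_mul_distrib]
  rw [Finset.prod_congr rfl (fun k (_ : k ∈ range (N+1)) => by
    rw [factor2 (k+1) (Nat.succ_pos k)] :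
    ∀ k ∈ range (N+1), ((1:(ZMod 3)⟦X⟧) - X^(2*(k+1)))^2 * inv1 (ZMod 3) (k+1)
      = (1 + X^(k+1)) * (1 - X^(2*(k+1))))]
  rw [PowerSeries.coeff_mul]
  apply Finset.sum_eq_zero
  intro p hp
  have hpm : p.1 + p.2 = N := Finset.HasAntidiagonal.mem_antidiagonal.1 hp
  by_cases hb : (3 ∣ p.2)
  · rw [coeffG_eq_zero (N+1) p.1 (by omega) (by omega), zero_mul]
  · rw [suppH (range (N+1)) (fun k => k+1) p.2 hb, mul_zero]

theorem main_aux (N : ℕ) (hN : N % 3 = 2) :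
    ∃ m : ℤ, (PowerSeries.coeff (R := ℚ) N (∏ k ∈ range (N+1),
      ((1 + (X:ℚ⟦X⟧)^(k+1))^2 * (((1:ℚ⟦X⟧) - X^(k+1))⁻¹)^2))) = 3*m := by
  set P : PowerSeries ℤ := ∏ k ∈ range (N+1), ((1 + X^(k+1))^2 * (inv1 ℤ (k+1))^2) with hP
  have hmapQ : PowerSeries.map (Int.castRingHom ℚ) P
      = ∏ k ∈ range (N+1), ((1 + (X:ℚ⟦X⟧)^(k+1))^2 * (((1:ℚ⟦X⟧) - X^(k+1))⁻¹)^2) := by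
    rw [hP, map_prod]
    apply Finset.prod_congr rfl
    intro k _
    rw [map_mul, map_pow, map_pow, map_add, map_one, map_pow, PowerSeries.map_X, map_inv1]
    congr 2
    rw [PowerSeries.eq_inv_iff_mul_eq_one]
    · rw [mul_comm]; exact inv1_mul (k+1) (Nat.succ_pos k)
    · rw [map_sub, map_one, map_pow, PowerSeries.constantCoeff_X,
        zero_pow (Nat.succ_ne_zero k), sub_zero]
      exact one_ne_zero
  have hQ : (PowerSeries.coeff (R := ℚ) N (∏ k ∈ range (N+1),
      ((1 + (X:ℚ⟦X⟧)^(k+1))^2 * (((1:ℚ⟦X⟧) - X^(k+1))⁻¹)^2)))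
      = ((PowerSeries.coeff (R := ℤ) N P : ℤ) : ℚ) := by
    rw [← hmapQ, PowerSeries.coeff_map]
    rfl
  have hmap3 : PowerSeries.map (Int.castRingHom (ZMod 3)) P
      = ∏ k ∈ range (N+1), ((1 + (X:(ZMod 3)⟦X⟧)^(k+1))^2 * (inv1 (ZMod 3) (k+1))^2) := by
    rw [hP, map_prod]
    apply Finset.prod_congr rfl
    intro k _
    rw [map_mul, map_pow, map_pow, map_add, map_one, map_pow, PowerSeries.map_X, map_inv1]
  have hz : ((PowerSeries.coeff (R := ℤ) N P : ℤ) : ZMod 3) = 0 := by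
    have := PowerSeries.coeff_map (Int.castRingHom (ZMod 3)) N P
    rw [hmap3, coeffZ3 N hN] at this
    exact this.symm
  obtain ⟨m, hm⟩ := (ZMod.intCast_zmod_eq_zero_iff_dvd _ 3).1 hz
  exact ⟨m, by rw [hQ, hm]; push_cast; ring⟩


noncomputable def ppbar (n : ℕ) : ℚ :=
  PowerSeries.coeff (R := ℚ) n (∏ k ∈ Finset.range (n + 1),
    ((1 + PowerSeries.X ^ (k + 1)) ^ 2 * ((1 - PowerSeries.X ^ (k + 1))⁻¹) ^ 2))

theorem ppbar_3n2_mod3 (n : ℕ) : ∃ m : ℤ, ppbar (3 * n + 2) = 3 * m := by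
  unfold ppbar
  exact main_aux (3 * n + 2) (by omega)
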